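/- Fix c with 0 < c < 1, and suppose that for every group a ∈ G the conditional law of p(X) given g(X) = a has positive density on [0,1]. If d and d' are two decision rules that both satisfy statistical parity and both attain the maximum of u(·,c) over all decision rules satisfying statistical parity, then d(X) = d'(X) μ-almost surely. -/

import Mathlib

open MeasureTheory ProbabilityTheory Set

noncomputable section

lemma aux_integrable_of_abs_le {Ω : Type*} [MeasurableSpace Ω] (μ : Measure Ω)
    [IsFiniteMeasure μ] {f : Ω → ℝ} (hf : Measurable f) (C : ℝ) (h : ∀ ω, |f ω| ≤ C) :
    Integrable f μ :=
  (integrable_const C).mono' hf.aestronglyMeasurable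
    (ae_of_all _ fun ω => by simpa [Real.norm_eq_abs] using h ω)

lemma aux_cdf_continuous (ν : Measure ℝ) [IsProbabilityMeasure ν]
    (h0 : ∀ x : ℝ, ν {x} = 0) : Continuous (cdf ν) := by
  rw [continuous_iff_continuousAt]
  intro x
  rw [(cdf ν).mono.continuousAt_iff_leftLim_eq_rightLim, (cdf ν).rightLim_eq]
  have h1 := (cdf ν).measure_singleton x
  rw [measure_cdf, h0 x] at h1
  have h2 : cdf ν x - Function.leftLim (cdf ν) x ≤ 0 := by
    by_contra h
    push_neg at h
    rw [eq_comm, ENNReal.ofReal_eq_zero] at h1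
    linarith
  have h3 : Function.leftLim (cdf ν) x ≤ cdf ν x := (cdf ν).mono.leftLim_le le_rfl
  linarith

lemma aux_ivt (ν : Measure ℝ) [IsProbabilityMeasure ν]
    (h0 : ∀ x : ℝ, ν {x} = 0) (hsupp : ν (Icc (0:ℝ) 1)ᶜ = 0)
    {m : ℝ} (hm : m ∈ Icc (0:ℝ) 1) :
    ∃ t ∈ Icc (0:ℝ) 1, (ν (Ioc t 1)).toReal = m := by
  have hIoc : ∀ t : ℝ, ν (Ioc t 1) = ENNReal.ofReal (cdf ν 1 - cdf ν t) := by
    intro t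
    conv_lhs => rw [← measure_cdf (μ := ν)]
    exact (cdf ν).measure_Ioc t 1
  have hG : ∀ t : ℝ, t ≤ 1 → (ν (Ioc t 1)).toReal = cdf ν 1 - cdf ν t := by
    intro t ht
    rw [hIoc t, ENNReal.toReal_ofReal (sub_nonneg.mpr ((cdf ν).mono ht))]
  have hG1 : (ν (Ioc (1:ℝ) 1)).toReal = 0 := by simp
  have hG0 : (ν (Ioc (0:ℝ) 1)).toReal = 1 := by
    have hsub : (univ : Set ℝ) ⊆ Ioc (0:ℝ) 1 ∪ ((Icc (0:ℝ) 1)ᶜ ∪ {0}) := by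
      intro x _
      by_cases hx : x ∈ Icc (0:ℝ) 1
      · rcases eq_or_lt_of_le hx.1 with h | h
        · exact Or.inr (Or.inr (by simp [← h]))
        · exact Or.inl ⟨h, hx.2⟩
      · exact Or.inr (Or.inl hx)
    have h1 : (1 : ENNReal) ≤ ν (Ioc (0:ℝ) 1) := by
      calc (1 : ENNReal) = ν univ := (measure_univ).symm
        _ ≤ ν (Ioc (0:ℝ) 1 ∪ ((Icc (0:ℝ) 1)ᶜ ∪ {0})) := measure_mono hsub
        _ ≤ ν (Ioc (0:ℝ) 1) + ν ((Icc (0:ℝ) 1)ᶜ ∪ {0}) := measure_union_le _ _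
        _ ≤ ν (Ioc (0:ℝ) 1) + (ν ((Icc (0:ℝ) 1)ᶜ) + ν {0}) :=
            add_le_add le_rfl (measure_union_le _ _)
        _ = ν (Ioc (0:ℝ) 1) := by rw [hsupp, h0 0]; simp
    have h2 : ν (Ioc (0:ℝ) 1) ≤ 1 := prob_le_one
    have : ν (Ioc (0:ℝ) 1) = 1 := le_antisymm h2 h1
    simp [this]
  have hcont : ContinuousOn (fun t => (ν (Ioc t 1)).toReal) (Icc (0:ℝ) 1) := by
    refine ContinuousOn.congr (f := fun t => cdf ν 1 - cdf ν t) ?_ ?_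
    · exact (continuous_const.sub (aux_cdf_continuous ν h0)).continuousOn
    · intro t ht
      exact hG t ht.2
  have := intermediate_value_Icc' (le_of_lt one_pos) hcont
  have hmem : m ∈ Icc ((fun t => (ν (Ioc t 1)).toReal) 1) ((fun t => (ν (Ioc t 1)).toReal) 0) := by
    simp only [hG1, hG0]; exact hm
  obtain ⟨t, ht, htm⟩ := this hmem
  exact ⟨t, ht, htm⟩

/-- A probability law on ℝ has positive density on `[0,1]`. -/
def PosDensity01 (ν : Measure ℝ) : Prop :=
  ∃ φ : ℝ → ENNReal,
    ν = volume.withDensity φ ∧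
    (∀ᵐ x ∂(volume.restrict (Icc (0:ℝ) 1)), 0 < φ x) ∧
    (∀ᵐ x ∂(volume : Measure ℝ), x ∉ Icc (0:ℝ) 1 → φ x = 0)

/-- A decision rule `d` satisfies statistical parity. -/
def StatParity {Ω 𝒳 G : Type*} [MeasurableSpace Ω]
    (μ : Measure Ω) (X : Ω → 𝒳) (g : 𝒳 → G) (d : 𝒳 → ℝ) : Prop :=
  ∀ a : G, (∫ ω in {ω | g (X ω) = a}, d (X ω) ∂μ) / (μ {ω | g (X ω) = a}).toReal
    = ∫ ω, d (X ω) ∂μ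

lemma aux_key
    {Ω 𝒳 G : Type*} [MeasurableSpace Ω] [MeasurableSpace 𝒳]
    [MeasurableSpace G] [MeasurableSingletonClass G]
    (μ : Measure Ω) [IsProbabilityMeasure μ]
    (X : Ω → 𝒳) (hX : Measurable X)
    (Y : Ω → ℝ) (hY : Measurable Y) (hY01 : ∀ ω, Y ω = 0 ∨ Y ω = 1)
    (p : 𝒳 → ℝ) (hp : Measurable p) (hp01 : ∀ x, p x ∈ Icc (0:ℝ) 1)
    (hrisk : ∀ f : 𝒳 → ℝ, Measurable f → (∃ C, ∀ x, |f x| ≤ C) →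
      ∫ ω, Y ω * f (X ω) ∂μ = ∫ ω, p (X ω) * f (X ω) ∂μ)
    (g : 𝒳 → G) (hg : Measurable g)
    (a : G)
    (hgpos : 0 < μ {ω | g (X ω) = a})
    (hdens : PosDensity01 (Measure.map (fun ω => p (X ω))
        (ProbabilityTheory.cond μ {ω | g (X ω) = a})))
    (c : ℝ)
    (f : 𝒳 → ℝ)
    (hf : Measurable f) (hf01 : ∀ x, f x ∈ Icc (0:ℝ) 1) (hfP : StatParity μ X g f)
    (hfopt : ∀ e : 𝒳 → ℝ, Measurable e → (∀ x, e x ∈ Icc (0:ℝ) 1) → StatParity μ X g e →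
      (∫ ω, Y ω * e (X ω) ∂μ) - c * ∫ ω, e (X ω) ∂μ
        ≤ (∫ ω, Y ω * f (X ω) ∂μ) - c * ∫ ω, f (X ω) ∂μ) :
    ∃ t : ℝ, ∀ᵐ ω ∂μ, g (X ω) = a → f (X ω) = (if t < p (X ω) then (1:ℝ) else 0) := by
  classical
  set S : Set Ω := {ω | g (X ω) = a} with hS_def
  have hpX : Measurable fun ω => p (X ω) := hp.comp hX
  have hSm : MeasurableSet S := (hg.comp hX) (measurableSet_singleton a)
  have hS0 : μ S ≠ 0 := hgpos.ne'
  have hSfin : μ S ≠ ⊤ := measure_ne_top μ S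
  have hSR : 0 < (μ S).toReal := ENNReal.toReal_pos hS0 hSfin
  set ν : Measure ℝ := Measure.map (fun ω => p (X ω)) (ProbabilityTheory.cond μ S) with hν_def
  haveI : IsProbabilityMeasure (ProbabilityTheory.cond μ S) :=
    cond_isProbabilityMeasure hS0
  haveI : IsProbabilityMeasure ν := Measure.isProbabilityMeasure_map hpX.aemeasurable
  have hνapp : ∀ B : Set ℝ, MeasurableSet B →
      ν B = (μ S)⁻¹ * μ (S ∩ {ω | p (X ω) ∈ B}) := by
    intro B hB
    rw [hν_def, Measure.map_apply hpX hB, cond_apply hSm μ _]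
    rfl
  have hmul : ∀ B : Set ℝ, MeasurableSet B →
      μ (S ∩ {ω | p (X ω) ∈ B}) = μ S * ν B := by
    intro B hB
    rw [hνapp B hB, ← mul_assoc, ENNReal.mul_inv_cancel hS0 hSfin, one_mul]
  -- atomless
  have hν0 : ∀ x : ℝ, ν {x} = 0 := by
    obtain ⟨φ, hφeq, -, -⟩ := hdens
    intro x
    rw [hν_def] at hφeq ⊢
    rw [hφeq, withDensity_apply φ (measurableSet_singleton x),
      setLIntegral_measure_zero _ _ Real.volume_singleton]
  have hatom : ∀ x : ℝ, μ (S ∩ {ω | p (X ω) = x}) = 0 := by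
    intro x
    have : μ (S ∩ {ω | p (X ω) ∈ ({x} : Set ℝ)}) = μ S * ν {x} :=
      hmul {x} (measurableSet_singleton x)
    simpa [hν0 x] using this
  -- support
  have hsupp : ν (Icc (0:ℝ) 1)ᶜ = 0 := by
    rw [hν_def, Measure.map_apply hpX (measurableSet_Icc.compl)]
    have : (fun ω => p (X ω)) ⁻¹' (Icc (0:ℝ) 1)ᶜ = ∅ := by
      ext ω; simp [hp01 (X ω)]
    rw [this, measure_empty]
  -- indicator integral
  have hT : ∀ t : ℝ, MeasurableSet {ω | t < p (X ω)} :=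
    fun t => measurableSet_lt measurable_const hpX
  have hind : ∀ t : ℝ, ∫ ω in S, (if t < p (X ω) then (1:ℝ) else 0) ∂μ
      = (μ S).toReal * (ν (Ioc t 1)).toReal := by
    intro t
    have h1 : (fun ω => if t < p (X ω) then (1:ℝ) else 0)
        = ({ω | t < p (X ω)}).indicator (fun _ => (1:ℝ)) := by
      funext ω; simp [Set.indicator_apply]
    have h2 : ∫ ω in S, (if t < p (X ω) then (1:ℝ) else 0) ∂μ
        = ((μ.restrict S) {ω | t < p (X ω)}).toReal := by
      rw [h1]
      exact integral_indicator_one (hT t)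
    rw [h2, Measure.restrict_apply (hT t)]
    have h3 : {ω | t < p (X ω)} ∩ S = S ∩ {ω | p (X ω) ∈ Ioc t 1} := by
      ext ω
      constructor
      · rintro ⟨h, hs⟩; exact ⟨hs, h, (hp01 (X ω)).2⟩
      · rintro ⟨hs, h, -⟩; exact ⟨h, hs⟩
    rw [h3, hmul _ measurableSet_Ioc, ENNReal.toReal_mul]
  -- the common mean
  set m : ℝ := ∫ ω, f (X ω) ∂μ with hm_def
  have hYbd : ∀ ω, |Y ω| ≤ 1 := fun ω => by rcases hY01 ω with h | h <;> simp [h]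
  have hIntRule : ∀ (r : 𝒳 → ℝ), Measurable r → (∀ x, r x ∈ Icc (0:ℝ) 1) →
      ∀ (μ' : Measure Ω), IsFiniteMeasure μ' → Integrable (fun ω => r (X ω)) μ' := by
    intro r hr hr01 μ' hμ'
    exact aux_integrable_of_abs_le μ' (hr.comp hX) 1
      (fun ω => abs_le.mpr ⟨by linarith [(hr01 (X ω)).1], (hr01 (X ω)).2⟩)
  have hIntY : ∀ (r : 𝒳 → ℝ), Measurable r → (∀ x, r x ∈ Icc (0:ℝ) 1) →
      Integrable (fun ω => Y ω * r (X ω)) μ := by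
    intro r hr hr01
    apply aux_integrable_of_abs_le μ (hY.mul (hr.comp hX)) 1
    intro ω
    show |Y ω * r (X ω)| ≤ 1
    rw [abs_mul]
    calc |Y ω| * |r (X ω)| ≤ 1 * 1 := by
          apply mul_le_mul (hYbd ω) _ (abs_nonneg _) zero_le_one
          exact abs_le.mpr ⟨by linarith [(hr01 (X ω)).1], (hr01 (X ω)).2⟩
      _ = 1 := one_mul 1
  have hm0 : 0 ≤ m := integral_nonneg fun ω => (hf01 (X ω)).1
  have hm1 : m ≤ 1 := by
    have := integral_mono (hIntRule f hf hf01 μ inferInstance) (integrable_const (1:ℝ))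
      (fun ω => (hf01 (X ω)).2)
    simpa using this
  obtain ⟨t, ht01, hGt⟩ := aux_ivt ν hν0 hsupp ⟨hm0, hm1⟩
  refine ⟨t, ?_⟩
  -- the comparison rule
  set e : 𝒳 → ℝ := fun x => if g x = a then (if t < p x then (1:ℝ) else 0) else f x
    with he_def
  have he : Measurable e := by
    apply Measurable.ite (hg (measurableSet_singleton a))
    · exact Measurable.ite (measurableSet_lt measurable_const hp)
        measurable_const measurable_const
    · exact hf
  have he01 : ∀ x, e x ∈ Icc (0:ℝ) 1 := by
    intro x
    simp only [he_def]
    split_ifs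
    · exact ⟨zero_le_one, le_refl 1⟩
    · exact ⟨le_refl 0, zero_le_one⟩
    · exact hf01 x
  have hIntSub : ∀ (μ' : Measure Ω), IsFiniteMeasure μ' →
      Integrable (fun ω => e (X ω) - f (X ω)) μ' := by
    intro μ' hμ'
    exact (hIntRule e he he01 μ' hμ').sub (hIntRule f hf hf01 μ' hμ')
  have hfS : ∫ ω in S, f (X ω) ∂μ = m * (μ S).toReal := by
    have h := hfP a
    rw [← hS_def] at h
    rw [div_eq_iff hSR.ne'] at h
    exact h
  have heS : ∫ ω in S, e (X ω) ∂μ = m * (μ S).toReal := by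
    have hcong : ∫ ω in S, e (X ω) ∂μ = ∫ ω in S, (if t < p (X ω) then (1:ℝ) else 0) ∂μ := by
      apply setIntegral_congr_fun hSm
      intro ω hω
      have hω' : g (X ω) = a := hω
      simp only [he_def]
      rw [if_pos hω']
    rw [hcong, hind t, hGt]
    ring
  have hdvanish : ∀ ω, ω ∉ S → e (X ω) - f (X ω) = 0 := by
    intro ω hω
    have hω' : ¬ g (X ω) = a := hω
    simp only [he_def]
    rw [if_neg hω', sub_self]
  have hsubS : ∫ ω in S, (e (X ω) - f (X ω)) ∂μ = 0 := by
    rw [integral_sub (hIntRule e he he01 _ inferInstance) (hIntRule f hf hf01 _ inferInstance),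
      heS, hfS, sub_self]
  have hsubTot : ∫ ω, (e (X ω) - f (X ω)) ∂μ = 0 := by
    rw [← setIntegral_eq_integral_of_forall_compl_eq_zero hdvanish]
    exact hsubS
  have heTot : ∫ ω, e (X ω) ∂μ = m := by
    have h := integral_sub (hIntRule e he he01 μ inferInstance) (hIntRule f hf hf01 μ inferInstance)
    rw [hsubTot] at h
    have h2 := h.symm
    rw [hm_def]
    linarith
  -- parity of e
  have heP : StatParity μ X g e := by
    intro b
    by_cases hb : b = a
    · subst hb
      show (∫ ω in S, e (X ω) ∂μ) / (μ S).toReal = _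
      rw [heS, heTot, mul_div_assoc, div_self hSR.ne', mul_one]
    · have hcong : ∫ ω in {ω | g (X ω) = b}, e (X ω) ∂μ
          = ∫ ω in {ω | g (X ω) = b}, f (X ω) ∂μ := by
        apply setIntegral_congr_fun ((hg.comp hX) (measurableSet_singleton b))
        intro ω hω
        have hω' : g (X ω) = b := hω
        simp only [he_def]
        rw [if_neg (by rw [hω']; exact hb)]
      show (∫ ω in {ω | g (X ω) = b}, e (X ω) ∂μ) / _ = _
      rw [hcong, heTot]
      exact hfP b
  -- optimality
  have hle := hfopt e he he01 heP
  have hDbd : ∀ x, |e x - f x| ≤ 1 := by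
    intro x
    rw [abs_le]
    constructor
    · linarith [(he01 x).1, (hf01 x).2]
    · linarith [(he01 x).2, (hf01 x).1]
  have hr := hrisk (fun x => e x - f x) (he.sub hf) ⟨1, hDbd⟩
  have hYsplit : ∫ ω, Y ω * (e (X ω) - f (X ω)) ∂μ
      = ∫ ω, Y ω * e (X ω) ∂μ - ∫ ω, Y ω * f (X ω) ∂μ := by
    have h1 : (fun ω => Y ω * (e (X ω) - f (X ω)))
        = fun ω => Y ω * e (X ω) - Y ω * f (X ω) := by
      funext ω; ring
    rw [h1]
    exact integral_sub (hIntY e he he01) (hIntY f hf hf01)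
  have hpD : ∫ ω, p (X ω) * (e (X ω) - f (X ω)) ∂μ ≤ 0 := by
    have h2 : ∫ ω, Y ω * (e (X ω) - f (X ω)) ∂μ
        = ∫ ω, p (X ω) * (e (X ω) - f (X ω)) ∂μ := hr
    rw [hYsplit] at h2
    rw [heTot] at hle
    linarith
  have hIntpD : Integrable (fun ω => p (X ω) * (e (X ω) - f (X ω))) μ := by
    apply aux_integrable_of_abs_le μ (hpX.mul ((he.comp hX).sub (hf.comp hX))) 1
    intro ω
    show |p (X ω) * (e (X ω) - f (X ω))| ≤ 1
    rw [abs_mul]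
    calc |p (X ω)| * |e (X ω) - f (X ω)| ≤ 1 * 1 := by
          apply mul_le_mul _ (hDbd (X ω)) (abs_nonneg _) zero_le_one
          exact abs_le.mpr ⟨by linarith [(hp01 (X ω)).1], (hp01 (X ω)).2⟩
      _ = 1 := one_mul 1
  have hIntq : Integrable (fun ω => (p (X ω) - t) * (e (X ω) - f (X ω))) μ := by
    have h1 : (fun ω => (p (X ω) - t) * (e (X ω) - f (X ω)))
        = fun ω => p (X ω) * (e (X ω) - f (X ω)) - t * (e (X ω) - f (X ω)) := by
      funext ω; ring
    rw [h1]
    exact hIntpD.sub ((hIntSub μ inferInstance).const_mul t)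
  have hq_le : ∫ ω, (p (X ω) - t) * (e (X ω) - f (X ω)) ∂μ ≤ 0 := by
    have h1 : (fun ω => (p (X ω) - t) * (e (X ω) - f (X ω)))
        = fun ω => p (X ω) * (e (X ω) - f (X ω)) - t * (e (X ω) - f (X ω)) := by
      funext ω; ring
    rw [h1, integral_sub hIntpD ((hIntSub μ inferInstance).const_mul t),
      integral_const_mul, hsubTot, mul_zero, sub_zero]
    exact hpD
  have hq0 : ∀ ω, 0 ≤ (p (X ω) - t) * (e (X ω) - f (X ω)) := by
    intro ω
    by_cases hω : g (X ω) = a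
    · simp only [he_def]
      rw [if_pos hω]
      by_cases hlt : t < p (X ω)
      · rw [if_pos hlt]
        have h1 := (hf01 (X ω)).2
        nlinarith
      · rw [if_neg hlt]
        push_neg at hlt
        have h1 := (hf01 (X ω)).1
        nlinarith
    · simp only [he_def]
      rw [if_neg hω, sub_self, mul_zero]
  have hq_eq : ∫ ω, (p (X ω) - t) * (e (X ω) - f (X ω)) ∂μ = 0 :=
    le_antisymm hq_le (integral_nonneg hq0)
  have hq_ae : (fun ω => (p (X ω) - t) * (e (X ω) - f (X ω))) =ᵐ[μ] 0 :=
    (integral_eq_zero_iff_of_nonneg hq0 hIntq).mp hq_eq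
  have hatom_ae : ∀ᵐ ω ∂μ, ω ∉ S ∩ {ω | p (X ω) = t} :=
    measure_eq_zero_iff_ae_notMem.mp (hatom t)
  filter_upwards [hq_ae, hatom_ae] with ω h1 h2 hga
  have hpt : p (X ω) ≠ t := fun h => h2 ⟨hga, h⟩
  have h1' : (p (X ω) - t) * (e (X ω) - f (X ω)) = 0 := h1
  rcases mul_eq_zero.mp h1' with h | h
  · exact absurd (sub_eq_zero.mp h) hpt
  · have h3 : e (X ω) = f (X ω) := by linarith
    rw [← h3]
    simp only [he_def]
    rw [if_pos hga]

/-- if `d` and `d'` both satisfy statistical parity and both attain the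
maximum of `u(·,c)` over decision rules satisfying statistical parity, then
`d(X) = d'(X)` μ-almost surely. -/
theorem stmt_4
    {Ω 𝒳 G : Type*} [MeasurableSpace Ω] [MeasurableSpace 𝒳]
    [Fintype G] [MeasurableSpace G] [MeasurableSingletonClass G]
    (μ : Measure Ω) [IsProbabilityMeasure μ]
    (X : Ω → 𝒳) (hX : Measurable X)
    (Y : Ω → ℝ) (hY : Measurable Y) (hY01 : ∀ ω, Y ω = 0 ∨ Y ω = 1)
    (p : 𝒳 → ℝ) (hp : Measurable p) (hp01 : ∀ x, p x ∈ Icc (0:ℝ) 1)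
    (hrisk : ∀ f : 𝒳 → ℝ, Measurable f → (∃ C, ∀ x, |f x| ≤ C) →
      ∫ ω, Y ω * f (X ω) ∂μ = ∫ ω, p (X ω) * f (X ω) ∂μ)
    (g : 𝒳 → G) (hg : Measurable g)
    (hgpos : ∀ a : G, 0 < μ {ω | g (X ω) = a})
    (hdens : ∀ a : G,
      PosDensity01 (Measure.map (fun ω => p (X ω))
        (ProbabilityTheory.cond μ {ω | g (X ω) = a})))
    (c : ℝ) (hc0 : 0 < c) (hc1 : c < 1)
    (d d' : 𝒳 → ℝ)
    (hd : Measurable d) (hd01 : ∀ x, d x ∈ Icc (0:ℝ) 1) (hdP : StatParity μ X g d)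
    (hd' : Measurable d') (hd01' : ∀ x, d' x ∈ Icc (0:ℝ) 1) (hdP' : StatParity μ X g d')
    (hmax : ∀ e : 𝒳 → ℝ, Measurable e → (∀ x, e x ∈ Icc (0:ℝ) 1) → StatParity μ X g e →
      (∫ ω, Y ω * e (X ω) ∂μ) - c * ∫ ω, e (X ω) ∂μ
        ≤ (∫ ω, Y ω * d (X ω) ∂μ) - c * ∫ ω, d (X ω) ∂μ)
    (hmax' : ∀ e : 𝒳 → ℝ, Measurable e → (∀ x, e x ∈ Icc (0:ℝ) 1) → StatParity μ X g e →
      (∫ ω, Y ω * e (X ω) ∂μ) - c * ∫ ω, e (X ω) ∂μ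
        ≤ (∫ ω, Y ω * d' (X ω) ∂μ) - c * ∫ ω, d' (X ω) ∂μ) :
    ∀ᵐ ω ∂μ, d (X ω) = d' (X ω) := by
  classical
  have hpX : Measurable fun ω => p (X ω) := hp.comp hX
  have hUdd' : (∫ ω, Y ω * d (X ω) ∂μ) - c * ∫ ω, d (X ω) ∂μ
      = (∫ ω, Y ω * d' (X ω) ∂μ) - c * ∫ ω, d' (X ω) ∂μ :=
    le_antisymm (hmax' d hd hd01 hdP) (hmax d' hd' hd01' hdP')
  have hYbd : ∀ ω, |Y ω| ≤ 1 := fun ω => by rcases hY01 ω with h | h <;> simp [h]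
  have hIntRule : ∀ (r : 𝒳 → ℝ), Measurable r → (∀ x, r x ∈ Icc (0:ℝ) 1) →
      ∀ (μ' : Measure Ω), IsFiniteMeasure μ' → Integrable (fun ω => r (X ω)) μ' := by
    intro r hr hr01 μ' hμ'
    exact aux_integrable_of_abs_le μ' (hr.comp hX) 1
      (fun ω => abs_le.mpr ⟨by linarith [(hr01 (X ω)).1], (hr01 (X ω)).2⟩)
  have hIntY : ∀ (r : 𝒳 → ℝ), Measurable r → (∀ x, r x ∈ Icc (0:ℝ) 1) →
      Integrable (fun ω => Y ω * r (X ω)) μ := by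
    intro r hr hr01
    apply aux_integrable_of_abs_le μ (hY.mul (hr.comp hX)) 1
    intro ω
    show |Y ω * r (X ω)| ≤ 1
    rw [abs_mul]
    calc |Y ω| * |r (X ω)| ≤ 1 * 1 := by
          apply mul_le_mul (hYbd ω) _ (abs_nonneg _) zero_le_one
          exact abs_le.mpr ⟨by linarith [(hr01 (X ω)).1], (hr01 (X ω)).2⟩
      _ = 1 := one_mul 1
  set e : 𝒳 → ℝ := fun x => (d x + d' x) / 2 with he_def
  have he : Measurable e := (hd.add hd').div_const 2
  have he01 : ∀ x, e x ∈ Icc (0:ℝ) 1 := by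
    intro x
    have h1 := hd01 x
    have h2 := hd01' x
    simp only [mem_Icc] at h1 h2 ⊢
    constructor
    · simp only [he_def]; linarith
    · simp only [he_def]; linarith
  have hesplit : ∀ (μ' : Measure Ω), IsFiniteMeasure μ' →
      ∫ ω, e (X ω) ∂μ' = ((∫ ω, d (X ω) ∂μ') + ∫ ω, d' (X ω) ∂μ') / 2 := by
    intro μ' hμ'
    have h1 : (fun ω => e (X ω)) = fun ω => (d (X ω) + d' (X ω)) / 2 := by
      funext ω; simp only [he_def]
    rw [h1, integral_div, integral_add (hIntRule d hd hd01 μ' hμ') (hIntRule d' hd' hd01' μ' hμ')]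
  have heP : StatParity μ X g e := by
    intro b
    have hb0 : (μ {ω | g (X ω) = b}).toReal ≠ 0 :=
      (ENNReal.toReal_pos (hgpos b).ne' (measure_ne_top μ _)).ne'
    have hA := hdP b
    have hB := hdP' b
    rw [div_eq_iff hb0] at hA hB
    rw [hesplit (μ.restrict {ω | g (X ω) = b}) inferInstance,
      hesplit μ inferInstance, hA, hB]
    field_simp
  have hYe : ∫ ω, Y ω * e (X ω) ∂μ
      = ((∫ ω, Y ω * d (X ω) ∂μ) + ∫ ω, Y ω * d' (X ω) ∂μ) / 2 := by
    have h1 : (fun ω => Y ω * e (X ω))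
        = fun ω => (Y ω * d (X ω) + Y ω * d' (X ω)) / 2 := by
      funext ω; simp only [he_def]; ring
    rw [h1, integral_div, integral_add (hIntY d hd hd01) (hIntY d' hd' hd01')]
  have hUe : (∫ ω, Y ω * e (X ω) ∂μ) - c * ∫ ω, e (X ω) ∂μ
      = (∫ ω, Y ω * d (X ω) ∂μ) - c * ∫ ω, d (X ω) ∂μ := by
    rw [hYe, hesplit μ inferInstance]
    linarith [hUdd']
  have heopt : ∀ f : 𝒳 → ℝ, Measurable f → (∀ x, f x ∈ Icc (0:ℝ) 1) → StatParity μ X g f →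
      (∫ ω, Y ω * f (X ω) ∂μ) - c * ∫ ω, f (X ω) ∂μ
        ≤ (∫ ω, Y ω * e (X ω) ∂μ) - c * ∫ ω, e (X ω) ∂μ := by
    intro f hf1 hf2 hf3
    rw [hUe]
    exact hmax f hf1 hf2 hf3
  have hall : ∀ a : G, ∀ᵐ ω ∂μ, g (X ω) = a → d (X ω) = d' (X ω) := by
    intro a
    obtain ⟨t, htd⟩ := aux_key μ X hX Y hY hY01 p hp hp01 hrisk g hg a (hgpos a) (hdens a)
      c d hd hd01 hdP hmax
    obtain ⟨t', htd'⟩ := aux_key μ X hX Y hY hY01 p hp hp01 hrisk g hg a (hgpos a) (hdens a)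
      c d' hd' hd01' hdP' hmax'
    obtain ⟨s, hte⟩ := aux_key μ X hX Y hY hY01 p hp hp01 hrisk g hg a (hgpos a) (hdens a)
      c e he he01 heP heopt
    filter_upwards [htd, htd', hte] with ω h1 h2 h3 hga
    have e1 := h1 hga
    have e2 := h2 hga
    have e3 := h3 hga
    simp only [he_def] at e3
    rw [e1, e2] at e3
    rw [e1, e2]
    split_ifs at e3 ⊢ <;> norm_num at *
  have hae := ae_all_iff.mpr hall
  filter_upwards [hae] with ω h
  exact h (g (X ω)) rfl
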